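/- Let G be a graph on n vertices, u, v distinct nonadjacent vertices, and G' = G + uv. Then for all m ≥ max{2, χ_DP(G)}, P_DP(G',m) < P_DP(G,m). -/

import Mathlib

open SimpleGraph

/-- The number of proper `m`-colorings of a graph `G`. -/
noncomputable def numColorings {V : Type} (G : SimpleGraph V) (m : ℕ) : ℕ :=
  Nat.card {c : V → Fin m // ∀ ⦃a b : V⦄, G.Adj a b → c a ≠ c b}

/-- An `m`-fold cover `(L, H)` of a graph `G`. -/
structure DPCover {V : Type} (G : SimpleGraph V) (m : ℕ) where
  X : Type
  H : SimpleGraph X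
  L : V → Set X
  partition : ∀ x : X, ∃! v : V, x ∈ L v
  fold : ∀ v : V, Nat.card (L v) = m
  cliques : ∀ v : V, ∀ x ∈ L v, ∀ y ∈ L v, x ≠ y → H.Adj x y
  cross : ∀ u v : V, ∀ x ∈ L u, ∀ y ∈ L v, H.Adj x y → u = v ∨ G.Adj u v
  matching : ∀ u v : V, G.Adj u v → ∀ x ∈ L u, ∀ y ∈ L v, ∀ z ∈ L v,
      H.Adj x y → H.Adj x z → y = z
  matching' : ∀ u v : V, G.Adj u v → ∀ y ∈ L u, ∀ z ∈ L u, ∀ x ∈ L v,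
      H.Adj y x → H.Adj z x → y = z

/-- A cover is full if for each edge `uv` of `G` the matching between `L u` and `L v`
is a perfect matching. -/
def DPCover.IsFull {V : Type} {G : SimpleGraph V} {m : ℕ} (C : DPCover G m) : Prop :=
  ∀ u v : V, G.Adj u v → ∀ x ∈ C.L u, ∃ y ∈ C.L v, C.H.Adj x y

/-- An `H`-coloring of `G`, viewed as an independent transversal of the lists. -/
def DPCover.IsColoring {V : Type} {G : SimpleGraph V} {m : ℕ} (C : DPCover G m)
    (f : V → C.X) : Prop :=
  (∀ v : V, f v ∈ C.L v) ∧ ∀ u v : V, u ≠ v → ¬ C.H.Adj (f u) (f v)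

/-- `P_DP(G, 𝓗)`, the number of `𝓗`-colorings of `G`. -/
noncomputable def DPCover.count {V : Type} {G : SimpleGraph V} {m : ℕ}
    (C : DPCover G m) : ℕ :=
  Nat.card {f : V → C.X // C.IsColoring f}

/-- The DP color function `P_DP(G, m)`. -/
noncomputable def PDP {V : Type} (G : SimpleGraph V) (m : ℕ) : ℕ :=
  sInf {n : ℕ | ∃ C : DPCover G m, C.count = n}

/-- The DP-chromatic number `χ_DP(G)`. -/
noncomputable def chiDP {V : Type} (G : SimpleGraph V) : ℕ :=
  sInf {m : ℕ | ∀ C : DPCover G m, ∃ f : V → C.X, C.IsColoring f}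

/-- A canonical labeling of an `m`-fold cover. -/
def DPCover.HasCanonicalLabeling {V : Type} {G : SimpleGraph V} {m : ℕ}
    (C : DPCover G m) : Prop :=
  ∃ φ : V × Fin m → C.X, Function.Bijective φ ∧ (∀ v j, φ (v, j) ∈ C.L v) ∧
    ∀ u v : V, G.Adj u v → ∀ j : Fin m, C.H.Adj (φ (u, j)) (φ (v, j))

/-- A graph is 2-connected if it has at least 3 vertices, is connected, and
remains connected after deleting any single vertex. -/
def TwoConnected {V : Type} (G : SimpleGraph V) : Prop :=
  3 ≤ Nat.card V ∧ G.Connected ∧ ∀ v : V, (G.induce ({v}ᶜ : Set V)).Connected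


section Aux

variable {V : Type} {G : SimpleGraph V} {m : ℕ}

lemma DPCover.mem_unique (C : DPCover G m) {x : C.X} {a b : V}
    (ha : x ∈ C.L a) (hb : x ∈ C.L b) : a = b := by
  obtain ⟨w, _, hu⟩ := C.partition x
  rw [hu a ha, hu b hb]

lemma DPCover.listFinite (C : DPCover G m) (hm : 0 < m) (v : V) : (C.L v).Finite := by
  have : Finite (C.L v) := Nat.finite_of_card_ne_zero (by rw [C.fold]; omega)
  exact Set.finite_coe_iff.mp this

lemma DPCover.listNonempty (C : DPCover G m) (hm : 0 < m) (v : V) : (C.L v).Nonempty := by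
  have h : 0 < Nat.card (C.L v) := by rw [C.fold]; exact hm
  have := (Nat.card_pos_iff.mp h).1
  exact Set.nonempty_coe_sort.mp this

lemma DPCover.finiteX [Finite V] (C : DPCover G m) (hm : 0 < m) : Finite C.X := by
  have hL : ∀ v : V, Finite (C.L v) := fun v => (C.listFinite hm v).to_subtype
  refine Finite.of_injective (fun x : C.X =>
    (⟨(C.partition x).choose, ⟨x, (C.partition x).choose_spec.1⟩⟩ : Σ v : V, C.L v)) ?_
  intro x y h
  have := congrArg (fun p : Σ v : V, C.L v => (p.2 : C.X)) h
  simpa using this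

end Aux

section Canon

variable {V : Type} {m : ℕ}

/-- The canonical `m`-fold cover of `G`. -/
def canonicalCover (G : SimpleGraph V) (m : ℕ) : DPCover G m where
  X := V × Fin m
  H := { Adj := fun p q => (p.1 = q.1 ∧ p.2 ≠ q.2) ∨ (G.Adj p.1 q.1 ∧ p.2 = q.2)
         symm := ⟨by
           rintro p q (⟨h1, h2⟩ | ⟨h1, h2⟩)
           · exact Or.inl ⟨h1.symm, h2.symm⟩
           · exact Or.inr ⟨h1.symm, h2.symm⟩⟩
         loopless := ⟨by rintro p (⟨_, h⟩ | ⟨h, _⟩)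
                         · exact h rfl
                         · exact G.loopless.irrefl _ h⟩ }
  L := fun v => {p | p.1 = v}
  partition := fun p => ⟨p.1, rfl, fun w hw => hw.symm⟩
  fold := fun v => by
    have e : {p : V × Fin m // p.1 = v} ≃ Fin m :=
      { toFun := fun p => p.1.2
        invFun := fun j => ⟨(v, j), rfl⟩
        left_inv := fun p => Subtype.ext (Prod.ext p.2.symm rfl)
        right_inv := fun j => rfl }
    calc Nat.card {p : V × Fin m // p.1 = v} = Nat.card (Fin m) := Nat.card_congr e
      _ = m := Nat.card_eq_fintype_card.trans (Fintype.card_fin m)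
  cliques := fun v x hx y hy hne => Or.inl ⟨hx.trans hy.symm, fun h2 => hne (Prod.ext (hx.trans hy.symm) h2)⟩
  cross := by
    rintro a b x hx y hy (⟨h1, _⟩ | ⟨h1, _⟩)
    · exact Or.inl ((hx.symm.trans h1).trans hy)
    · refine Or.inr ?_
      rw [← hx, ← hy]; exact h1
  matching := by
    rintro a b hab x hx y hy z hz (⟨h1, _⟩ | ⟨h1, h2⟩) h'
    · exact absurd (G.ne_of_adj hab) (by rw [← hx, ← hy, h1] at *; exact fun h => h rfl)
    · rcases h' with ⟨h1', _⟩ | ⟨_, h2'⟩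
      · exact absurd (G.ne_of_adj hab) (by rw [← hx, ← hz, h1'] at *; exact fun h => h rfl)
      · exact Prod.ext (hy.trans hz.symm) (h2.symm.trans h2')
  matching' := by
    rintro a b hab y hy z hz x hx (⟨h1, _⟩ | ⟨_, h2⟩) h'
    · exact absurd (G.ne_of_adj hab) (by rw [← hy, ← hx, h1] at *; exact fun h => h rfl)
    · rcases h' with ⟨h1', _⟩ | ⟨_, h2'⟩
      · exact absurd (G.ne_of_adj hab) (by rw [← hz, ← hx, h1'] at *; exact fun h => h rfl)
      · exact Prod.ext (hy.trans hz.symm) (h2.trans h2'.symm)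

end Canon

section Greedy

variable {V : Type} {G : SimpleGraph V} {m : ℕ}

lemma DPCover.exists_coloring_of_card_le [Fintype V] (C : DPCover G m)
    (h : Fintype.card V ≤ m) : ∃ f, C.IsColoring f := by
  classical
  by_cases hV : Nonempty V
  case neg =>
    have : IsEmpty V := not_nonempty_iff.mp hV
    exact ⟨fun v => (this.false v).elim, fun v => (this.false v).elim,
      fun a b _ => (this.false a).elim⟩
  case pos =>
  have hn1 : 1 ≤ Fintype.card V := Fintype.card_pos
  have hm : 0 < m := lt_of_lt_of_le hn1 h
  set n := Fintype.card V with hn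
  let e : Fin n ≃ V := (Fintype.equivFin V).symm
  have key : ∀ k : ℕ, k ≤ n → ∃ f : Fin n → C.X, ∀ i : Fin n, i.1 < k →
      (f i ∈ C.L (e i) ∧ ∀ j : Fin n, j < i → ¬ C.H.Adj (f j) (f i)) := by
    intro k
    induction k with
    | zero =>
      intro _
      obtain ⟨x0, _⟩ := C.listNonempty hm (Classical.arbitrary V)
      exact ⟨fun _ => x0, fun i hi => absurd hi (Nat.not_lt_zero _)⟩
    | succ k ih =>
      intro hk1
      obtain ⟨f, hf⟩ := ih (le_of_lt hk1)
      have hkn : k < n := hk1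
      set vk : V := e ⟨k, hkn⟩ with hvk
      have hfinv := C.listFinite hm vk
      set Lfin : Finset C.X := hfinv.toFinset with hLfin
      have hLcard : Lfin.card = m := by
        rw [hLfin, ← Set.ncard_eq_toFinset_card _ hfinv, ← Nat.card_coe_set_eq, C.fold]
      set B : Finset C.X := (Finset.univ.filter (fun j : Fin n => j.1 < k)).biUnion
        (fun j => Lfin.filter (fun x => C.H.Adj (f j) x)) with hB
      have hBcard : B.card ≤ k := by
        calc B.card ≤ ∑ j ∈ Finset.univ.filter (fun j : Fin n => j.1 < k),
            (Lfin.filter (fun x => C.H.Adj (f j) x)).card := Finset.card_biUnion_le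
          _ ≤ ∑ _j ∈ Finset.univ.filter (fun j : Fin n => j.1 < k), 1 := by
              refine Finset.sum_le_sum ?_
              intro j hj
              have hjk : j.1 < k := (Finset.mem_filter.mp hj).2
              refine Finset.card_le_one.mpr ?_
              intro a ha b hb
              have haL : a ∈ C.L vk := hfinv.mem_toFinset.mp (Finset.mem_filter.mp ha).1
              have hbL : b ∈ C.L vk := hfinv.mem_toFinset.mp (Finset.mem_filter.mp hb).1
              have haA : C.H.Adj (f j) a := (Finset.mem_filter.mp ha).2
              have hbA : C.H.Adj (f j) b := (Finset.mem_filter.mp hb).2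
              have hfjL : f j ∈ C.L (e j) := (hf j hjk).1
              have hne : e j ≠ vk := by
                intro hcontr
                have := e.injective hcontr
                rw [Fin.ext_iff] at this
                simp only at this
                omega
              by_cases hGadj : G.Adj (e j) vk
              · exact C.matching (e j) vk hGadj (f j) hfjL a haL b hbL haA hbA
              · rcases C.cross (e j) vk (f j) hfjL a haL haA with h' | h'
                · exact absurd h' hne
                · exact absurd h' hGadj
          _ = (Finset.univ.filter (fun j : Fin n => j.1 < k)).card := by
              rw [Finset.sum_const, smul_eq_mul, mul_one]
          _ ≤ (Finset.range k).card := Finset.card_le_card_of_injOn Fin.val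
              (fun j hj => Finset.mem_range.mpr (Finset.mem_filter.mp hj).2)
              (fun a _ b _ hab => Fin.ext hab)
          _ = k := Finset.card_range k
      have hlt : B.card < Lfin.card := by rw [hLcard]; omega
      have hns : ¬ Lfin ⊆ B := fun hsub => absurd (Finset.card_le_card hsub) (not_le.mpr hlt)
      obtain ⟨x, hxL, hxB⟩ := Finset.not_subset.mp hns
      have hxLv : x ∈ C.L vk := hfinv.mem_toFinset.mp hxL
      have hxgood : ∀ j : Fin n, j.1 < k → ¬ C.H.Adj (f j) x := by
        intro j hj hAdj
        exact hxB (Finset.mem_biUnion.mpr ⟨j, Finset.mem_filter.mpr ⟨Finset.mem_univ _, hj⟩,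
          Finset.mem_filter.mpr ⟨hxL, hAdj⟩⟩)
      refine ⟨Function.update f ⟨k, hkn⟩ x, ?_⟩
      intro i hi
      by_cases hik : i = ⟨k, hkn⟩
      · subst hik
        rw [Function.update_self]
        refine ⟨hxLv, ?_⟩
        intro j hj
        have hjk : j.1 < k := hj
        have hjne : j ≠ ⟨k, hkn⟩ := Fin.ne_of_lt hj
        rw [Function.update_of_ne hjne]
        exact hxgood j hjk
      · have hik' : i.1 < k := by
          have hne2 : (i : ℕ) ≠ k := fun hc => hik (Fin.ext (by simpa using hc))
          omega
        rw [Function.update_of_ne hik]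
        refine ⟨(hf i hik').1, ?_⟩
        intro j hj
        have hjval : (j : ℕ) < k := Nat.lt_trans (Fin.lt_def.mp hj) hik'
        have hjne : j ≠ ⟨k, hkn⟩ := Fin.ne_of_val_ne (by simpa using Nat.ne_of_lt hjval)
        rw [Function.update_of_ne hjne]
        exact (hf i hik').2 j hj
  obtain ⟨f, hf⟩ := key n le_rfl
  refine ⟨fun w => f (e.symm w), ?_, ?_⟩
  · intro w
    have := (hf (e.symm w) (e.symm w).isLt).1
    rwa [e.apply_symm_apply] at this
  · intro a b hab hAdj
    have hij : e.symm a ≠ e.symm b := fun hcontr => hab (e.symm.injective hcontr)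
    rcases lt_or_gt_of_ne hij with h | h
    · exact (hf (e.symm b) (e.symm b).isLt).2 (e.symm a) h hAdj
    · exact (hf (e.symm a) (e.symm a).isLt).2 (e.symm b) h hAdj.symm

end Greedy

section Mono

variable {V : Type} {G : SimpleGraph V}

lemma colorable_mono {k m : ℕ} (hkm : k ≤ m)
    (hk : ∀ C : DPCover G k, ∃ f, C.IsColoring f) :
    ∀ C : DPCover G m, ∃ f, C.IsColoring f := by
  classical
  rcases Nat.eq_zero_or_pos m with hm0 | hm
  · have : k = 0 := by omega
    subst hm0
    subst this
    exact hk
  intro C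
  have hfin : ∀ v : V, (C.L v).Finite := C.listFinite hm
  have hcard : ∀ v : V, k ≤ ((hfin v).toFinset).card := by
    intro v
    rw [← Set.ncard_eq_toFinset_card _ (hfin v), ← Nat.card_coe_set_eq, C.fold]
    exact hkm
  choose T hT1 hT2 using fun v => Finset.exists_subset_card_eq (hcard v)
  have hTL : ∀ v : V, ∀ x ∈ T v, x ∈ C.L v := fun v x hx =>
    ((hfin v).mem_toFinset).mp (hT1 v hx)
  let C' : DPCover G k :=
    { X := {x : C.X // ∃ w, x ∈ T w}
      H := C.H.comap Subtype.val
      L := fun v => {x | ↑x ∈ T v}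
      partition := by
        rintro ⟨x, w, hw⟩
        refine ⟨w, hw, ?_⟩
        intro w' hw'
        exact C.mem_unique (hTL w' x hw') (hTL w x hw)
      fold := by
        intro v
        have e : {x : {x : C.X // ∃ w, x ∈ T w} // ↑x ∈ T v} ≃ {y : C.X // y ∈ T v} :=
          { toFun := fun x => ⟨x.1.1, x.2⟩
            invFun := fun y => ⟨⟨y.1, ⟨v, y.2⟩⟩, y.2⟩
            left_inv := fun x => Subtype.ext (Subtype.ext rfl)
            right_inv := fun y => rfl }
        calc Nat.card {x : {x : C.X // ∃ w, x ∈ T w} // ↑x ∈ T v}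
            = Nat.card {y : C.X // y ∈ T v} := Nat.card_congr e
          _ = (T v).card := Nat.card_eq_finsetCard (T v)
          _ = k := hT2 v
      cliques := by
        rintro v ⟨x, hxw⟩ hx ⟨y, hyw⟩ hy hne
        exact C.cliques v x (hTL v x hx) y (hTL v y hy) (fun hc => hne (Subtype.ext hc))
      cross := by
        rintro a b ⟨x, hxw⟩ hx ⟨y, hyw⟩ hy hAdj
        exact C.cross a b x (hTL a x hx) y (hTL b y hy) hAdj
      matching := by
        rintro a b hab ⟨x, hxw⟩ hx ⟨y, hyw⟩ hy ⟨z, hzw⟩ hz h1 h2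
        exact Subtype.ext (C.matching a b hab x (hTL a x hx) y (hTL b y hy) z (hTL b z hz) h1 h2)
      matching' := by
        rintro a b hab ⟨y, hyw⟩ hy ⟨z, hzw⟩ hz ⟨x, hxw⟩ hx h1 h2
        exact Subtype.ext (C.matching' a b hab y (hTL a y hy) z (hTL a z hz) x (hTL b x hx) h1 h2) }
  obtain ⟨f, hf1, hf2⟩ := hk C'
  refine ⟨fun v => (f v).1, ?_, ?_⟩
  · intro v
    exact hTL v (f v).1 (hf1 v)
  · intro a b hab hAdj
    exact hf2 a b hab hAdj

end Mono

section Main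

variable {V : Type} {G : SimpleGraph V} {m : ℕ}

lemma addEdge_key (C : DPCover G m) (u v : V) (f : V → C.X) (huv : u ≠ v)
    (hadj : ¬ G.Adj u v) (hfL : ∀ w, f w ∈ C.L w) :
    ∀ a b : V, (G ⊔ SimpleGraph.fromEdgeSet {s(u, v)}).Adj a b →
      ∀ x ∈ C.L a, ∀ y ∈ C.L b, ∀ z ∈ C.L b,
      (C.H ⊔ SimpleGraph.fromEdgeSet {s(f u, f v)}).Adj x y →
      (C.H ⊔ SimpleGraph.fromEdgeSet {s(f u, f v)}).Adj x z → y = z := by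
  have hfufv : f u ≠ f v := fun hc => huv (C.mem_unique (hc ▸ hfL u) (hfL v))
  intro a b hab x hx y hy z hz h1 h2
  have hne : a ≠ b := hab.ne
  by_cases hG : G.Adj a b
  · have hHedge : ∀ w ∈ C.L b,
        (C.H ⊔ SimpleGraph.fromEdgeSet {s(f u, f v)}).Adj x w → C.H.Adj x w := by
      rintro w hw (hH | hNew)
      · exact hH
      · exfalso
        rw [SimpleGraph.fromEdgeSet_adj, Set.mem_singleton_iff] at hNew
        rcases Sym2.eq_iff.mp hNew.1 with ⟨hx', hw'⟩ | ⟨hx', hw'⟩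
        · have ha : a = u := C.mem_unique hx (hx' ▸ hfL u)
          have hb : b = v := C.mem_unique hw (hw' ▸ hfL v)
          exact hadj (ha ▸ hb ▸ hG)
        · have ha : a = v := C.mem_unique hx (hx' ▸ hfL v)
          have hb : b = u := C.mem_unique hw (hw' ▸ hfL u)
          exact hadj (by rw [ha, hb] at hG; exact hG.symm)
    exact C.matching a b hG x hx y hy z hz (hHedge y hy h1) (hHedge z hz h2)
  · have hNewEdge : ∀ w ∈ C.L b,
        (C.H ⊔ SimpleGraph.fromEdgeSet {s(f u, f v)}).Adj x w →
        s(x, w) = s(f u, f v) := by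
      rintro w hw (hH | hNew)
      · exfalso
        rcases C.cross a b x hx w hw hH with h | h
        · exact hne h
        · exact hG h
      · rw [SimpleGraph.fromEdgeSet_adj, Set.mem_singleton_iff] at hNew
        exact hNew.1
    have e1 := hNewEdge y hy h1
    have e2 := hNewEdge z hz h2
    rcases Sym2.eq_iff.mp e1 with ⟨hx1, hy1⟩ | ⟨hx1, hy1⟩ <;>
      rcases Sym2.eq_iff.mp e2 with ⟨hx2, hz2⟩ | ⟨hx2, hz2⟩
    · exact hy1.trans hz2.symm
    · exact absurd (hx1.symm.trans hx2) hfufv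
    · exact absurd (hx2.symm.trans hx1) hfufv
    · exact hy1.trans hz2.symm

/-- Add the edge between `f u` and `f v` to a cover of `G`, obtaining a cover of `G + uv`. -/
def DPCover.addEdge (C : DPCover G m) (u v : V) (f : V → C.X) (huv : u ≠ v)
    (hadj : ¬ G.Adj u v) (hfL : ∀ w, f w ∈ C.L w) :
    DPCover (G ⊔ SimpleGraph.fromEdgeSet {s(u, v)}) m where
  X := C.X
  H := C.H ⊔ SimpleGraph.fromEdgeSet {s(f u, f v)}
  L := C.L
  partition := C.partition
  fold := C.fold
  cliques := fun w x hx y hy hne => Or.inl (C.cliques w x hx y hy hne)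
  cross := by
    rintro a b x hx y hy (hH | hNew)
    · rcases C.cross a b x hx y hy hH with h | h
      · exact Or.inl h
      · exact Or.inr (Or.inl h)
    · rw [SimpleGraph.fromEdgeSet_adj, Set.mem_singleton_iff] at hNew
      have hfufv : f u ≠ f v := fun hc => huv (C.mem_unique (hc ▸ hfL u) (hfL v))
      rcases Sym2.eq_iff.mp hNew.1 with ⟨hx', hy'⟩ | ⟨hx', hy'⟩
      · have ha : a = u := C.mem_unique hx (hx' ▸ hfL u)
        have hb : b = v := C.mem_unique hy (hy' ▸ hfL v)
        subst ha; subst hb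
        exact Or.inr (Or.inr (by rw [SimpleGraph.fromEdgeSet_adj]; exact ⟨rfl, huv⟩))
      · have ha : a = v := C.mem_unique hx (hx' ▸ hfL v)
        have hb : b = u := C.mem_unique hy (hy' ▸ hfL u)
        subst ha; subst hb
        refine Or.inr (Or.inr ?_)
        rw [SimpleGraph.fromEdgeSet_adj]
        exact ⟨Sym2.eq_swap, huv.symm⟩
  matching := addEdge_key C u v f huv hadj hfL
  matching' := fun a b hab y hy z hz x hx h1 h2 =>
    addEdge_key C u v f huv hadj hfL b a hab.symm x hx y hy z hz h1.symm h2.symm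

end Main

theorem stmt_11 {V : Type} [Fintype V] (G : SimpleGraph V) (u v : V)
    (huv : u ≠ v) (hadj : ¬ G.Adj u v) (m : ℕ) (hm : max 2 (chiDP G) ≤ m) :
    PDP (G ⊔ SimpleGraph.fromEdgeSet {s(u, v)}) m < PDP G m := by
  classical
  have hm2 : 2 ≤ m := le_trans (le_max_left _ _) hm
  have hmχ : chiDP G ≤ m := le_trans (le_max_right _ _) hm
  have hm0 : 0 < m := by omega
  have hSne : {k : ℕ | ∀ C : DPCover G k, ∃ f, C.IsColoring f}.Nonempty :=
    ⟨Fintype.card V, fun C => C.exists_coloring_of_card_le le_rfl⟩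
  have hχmem : ∀ C : DPCover G (chiDP G), ∃ f, C.IsColoring f := Nat.sInf_mem hSne
  have hcol : ∀ C : DPCover G m, ∃ f, C.IsColoring f := colorable_mono hmχ hχmem
  have hPne : {n : ℕ | ∃ C : DPCover G m, C.count = n}.Nonempty := ⟨_, canonicalCover G m, rfl⟩
  obtain ⟨C, hC⟩ : ∃ C : DPCover G m, C.count = PDP G m := Nat.sInf_mem hPne
  obtain ⟨f, hf⟩ := hcol C
  have hfL := hf.1
  have hfufv : f u ≠ f v := fun hc => huv (C.mem_unique (hc ▸ hfL u) (hfL v))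
  haveI : Finite C.X := C.finiteX hm0
  let C' := C.addEdge u v f huv hadj hfL
  have hsub : {g : V → C.X | C'.IsColoring g} ⊂ {g : V → C.X | C.IsColoring g} := by
    constructor
    · intro g hg
      exact ⟨hg.1, fun a b hab hAdj => hg.2 a b hab (Or.inl hAdj)⟩
    · intro hcontr
      have hfC' : C'.IsColoring f := hcontr hf
      exact hfC'.2 u v huv
        (Or.inr (by rw [SimpleGraph.fromEdgeSet_adj]; exact ⟨rfl, hfufv⟩))
  have hBfin : {g : V → C.X | C.IsColoring g}.Finite := Set.toFinite _
  have hlt := Set.ncard_lt_ncard hsub hBfin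
  have h1 : C'.count = {g : V → C.X | C'.IsColoring g}.ncard := Nat.card_coe_set_eq _
  have h2 : C.count = {g : V → C.X | C.IsColoring g}.ncard := Nat.card_coe_set_eq _
  have hfinal : C'.count < C.count := by rw [h1, h2]; exact hlt
  have hle : PDP (G ⊔ SimpleGraph.fromEdgeSet {s(u, v)}) m ≤ C'.count :=
    Nat.sInf_le ⟨C', rfl⟩
  calc PDP (G ⊔ SimpleGraph.fromEdgeSet {s(u, v)}) m ≤ C'.count := hle
    _ < C.count := hfinal
    _ = PDP G m := hC
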